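/- Let X be a continuum and let A be a nonempty closed subset of X with T_X(A) ≠ A. Then for any continuum Y, the set A × Y is not a T-closed set in X × Y; that is, T_{X×Y}(A × Y) ≠ A × Y. -/

import Mathlib

open Set Metric

/-- A subcontinuum of a space `Z`: a nonempty compact connected subset. -/
def IsSubcontinuum {Z : Type*} [TopologicalSpace Z] (S : Set Z) : Prop :=
  IsCompact S ∧ IsConnected S

/-- Jones's set function `T`. -/
def jonesT {Z : Type*} [TopologicalSpace Z] (A : Set Z) : Set Z :=
  {x | ∃ W : Set Z, IsSubcontinuum W ∧ x ∈ interior W ∧ W ⊆ Aᶜ}ᶜ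

/-- Let `X` be a continuum and `A` a nonempty closed subset of `X` with
`T_X(A) ≠ A`. Then for any continuum `Y`, the set `A × Y` is not `T`-closed in
`X × Y`. -/
theorem stmt13 {X Y : Type*} [MetricSpace X] [CompactSpace X] [ConnectedSpace X]
    [MetricSpace Y] [CompactSpace Y] [ConnectedSpace Y]
    (A : Set X) (hne : A.Nonempty) (hcl : IsClosed A) (hTA : jonesT A ≠ A) :
    jonesT (A ×ˢ (Set.univ : Set Y)) ≠ A ×ˢ (Set.univ : Set Y) := by
  intro hT
  apply hTA
  apply Set.Subset.antisymm
  · -- jonesT A ⊆ A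
    intro x hx
    by_contra hxA
    obtain ⟨y⟩ := (inferInstance : Nonempty Y)
    have hxy : (x, y) ∉ A ×ˢ (Set.univ : Set Y) := by
      simp [hxA]
    rw [← hT] at hxy
    simp only [jonesT, Set.mem_compl_iff, Set.mem_setOf_eq, not_not] at hxy
    obtain ⟨W, ⟨hWc, hWconn⟩, hint, hsub⟩ := hxy
    apply hx
    refine ⟨Prod.fst '' W, ⟨hWc.image continuous_fst, hWconn.image _ continuous_fst.continuousOn⟩,
      ?_, ?_⟩
    · have hopen : IsOpen (Prod.fst '' interior W) := isOpenMap_fst _ isOpen_interior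
      exact interior_maximal (Set.image_mono (f := Prod.fst) interior_subset) hopen ⟨(x, y), hint, rfl⟩
    · rintro a ⟨w, hw, rfl⟩
      have := hsub hw
      simpa using this
  · -- A ⊆ jonesT A
    intro x hx ⟨W, _, hint, hsub⟩
    exact hsub (interior_subset hint) hx
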